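/- With the Monge point as origin, the altitudes h_i and h_j of a nondegenerate tetrahedron meet if and only if λ_{ki} = λ_{li} (equivalently λ_{lj} = λ_{kj}), where λ_{rs} = a_r·a_s and {i,j,k,l} = {0,1,2,3}; in particular b_{kl}·b_{ij} = 2(λ_{ki} - λ_{li}). -/

import Mathlib

open RealInnerProductSpace

/-- The altitude `h_m` of the tetrahedron `a 0, …, a 3`: the line through the
vertex `a m` perpendicular to the plane of the other three vertices. -/
def altitude (a : Fin 4 → EuclideanSpace ℝ (Fin 3)) (m : Fin 4) :
    Set (EuclideanSpace ℝ (Fin 3)) :=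
  {x | ∀ r s : Fin 4, r ≠ m → s ≠ m → ⟪a r - a s, a m - x⟫ = 0}

open Matrix in
private lemma inner_eq_dot (x y : EuclideanSpace ℝ (Fin 3)) :
    ⟪x, y⟫ = dotProduct (x : Fin 3 → ℝ) y := by
  simp [PiLp.inner_apply, dotProduct, mul_comm]

open Matrix in
private lemma cross_expand (a b c z : Fin 3 → ℝ) :
    (a ⬝ᵥ b ⨯₃ c) • z =
      (z ⬝ᵥ a) • (b ⨯₃ c) + (z ⬝ᵥ b) • (c ⨯₃ a) + (z ⬝ᵥ c) • (a ⨯₃ b) := by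
  funext m; fin_cases m <;> simp [crossProduct, dotProduct, Fin.sum_univ_succ] <;> ring

private lemma fin4_cases (i j k l m : Fin 4) (h1 : i ≠ j) (h2 : i ≠ k) (h3 : i ≠ l)
    (h4 : j ≠ k) (h5 : j ≠ l) (h6 : k ≠ l) (h7 : m ≠ l) : m = i ∨ m = j ∨ m = k := by
  revert i j k l m; decide

/-- With the Monge point of a nondegenerate tetrahedron at the origin and
`λ_{rs} := a_r · a_s`, one has `b_{kl}·b_{ij} = 2(λ_{ki} - λ_{li})`, and the
altitudes `h_i` and `h_j` meet if and only if `λ_{ki} = λ_{li}`. -/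
theorem stmt_18 (a : Fin 4 → EuclideanSpace ℝ (Fin 3))
    (ha : AffineIndependent ℝ a)
    (hm : ∀ i j k l : Fin 4, i ≠ j → i ≠ k → i ≠ l → j ≠ k → j ≠ l → k ≠ l →
      ⟪a i - a j, a k + a l⟫ = 0)
    (i j k l : Fin 4) (hij : i ≠ j) (hik : i ≠ k) (hil : i ≠ l)
    (hjk : j ≠ k) (hjl : j ≠ l) (hkl : k ≠ l) :
    ⟪a k - a l, a i - a j⟫ = 2 * (⟪a k, a i⟫ - ⟪a l, a i⟫) ∧
    ((∃ x, x ∈ altitude a i ∧ x ∈ altitude a j) ↔ ⟪a k, a i⟫ = ⟪a l, a i⟫) := by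
  classical
  have hm1 := hm k l i j hkl hik.symm hjk.symm hil.symm hjl.symm hij
  have h1 : ⟪a k - a l, a i - a j⟫ = 2 * (⟪a k, a i⟫ - ⟪a l, a i⟫) := by
    simp only [inner_sub_left, inner_sub_right, inner_add_right] at hm1 ⊢
    linarith
  refine ⟨h1, ?_⟩
  have hiff : ⟪a k, a i⟫ = ⟪a l, a i⟫ ↔ ⟪a k - a l, a i - a j⟫ = 0 := by
    rw [h1]; constructor
    · intro h; rw [h]; ring
    · intro h; nlinarith
  rw [hiff]
  constructor
  · rintro ⟨x, hxi, hxj⟩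
    have e1 := hxi k l hik.symm hil.symm
    have e2 := hxj k l hjk.symm hjl.symm
    have hsub : a i - a j = (a i - x) - (a j - x) := by abel
    rw [hsub, inner_sub_right, e1, e2, sub_zero]
  · intro h0
    -- set up vectors
    set u : EuclideanSpace ℝ (Fin 3) := a i - a l with hu
    set v : EuclideanSpace ℝ (Fin 3) := a j - a l with hv
    set w : EuclideanSpace ℝ (Fin 3) := a k - a l with hw
    set z : EuclideanSpace ℝ (Fin 3) := a i - a j with hz
    have hli3 : LinearIndependent ℝ ![u, v, w] := by
      have h' := (affineIndependent_iff_linearIndependent_vsub ℝ a l).mp ha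
      have hg : Function.Injective
          (fun m : Fin 3 => (![⟨i, hil⟩, ⟨j, hjl⟩, ⟨k, hkl⟩] m : {x : Fin 4 // x ≠ l})) := by
        intro x y hxy
        fin_cases x <;> fin_cases y <;> simp_all [Subtype.ext_iff]
      have h2 := h'.comp _ hg
      convert h2 using 1
      funext m
      fin_cases m <;> rfl
      rfl
    have hD : (dotProduct (u : Fin 3 → ℝ) (crossProduct v w)) ≠ 0 := by
      rw [triple_product_eq_det]
      have hU : IsUnit (Matrix.of ![(u : Fin 3 → ℝ), v, w]) :=
        Matrix.linearIndependent_rows_iff_isUnit.mp (by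
          have := hli3.map' (WithLp.linearEquiv 2 ℝ (Fin 3 → ℝ)).toLinearMap
            (WithLp.linearEquiv 2 ℝ (Fin 3 → ℝ)).ker
          convert this using 1; funext m; fin_cases m <;> rfl
          all_goals rfl)
      have := (Matrix.isUnit_iff_isUnit_det _).mp hU
      exact this.ne_zero
    set D : ℝ := dotProduct (u : Fin 3 → ℝ) (crossProduct v w) with hD'
    have hzw : dotProduct (z : Fin 3 → ℝ) (w : Fin 3 → ℝ) = 0 := by
      have := h0
      rw [inner_eq_dot] at this
      rw [dotProduct_comm]
      exact this
    have hexp := cross_expand (u : Fin 3 → ℝ) v w z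
    rw [hzw, zero_smul, add_zero] at hexp
    rw [← hD'] at hexp
    -- z = D⁻¹ • ((z⬝u) • (v×w) + (z⬝v) • (w×u))
    have hzeq : (z : Fin 3 → ℝ) =
        (D⁻¹ * dotProduct (z : Fin 3 → ℝ) u) • (crossProduct v w)
        + (D⁻¹ * dotProduct (z : Fin 3 → ℝ) v) • (crossProduct w u) := by
      rw [mul_smul, mul_smul, ← smul_add, ← hexp, smul_smul, inv_mul_cancel₀ hD, one_smul]
    set s : ℝ := D⁻¹ * dotProduct (z : Fin 3 → ℝ) u with hs
    set t : ℝ := D⁻¹ * dotProduct (z : Fin 3 → ℝ) v with ht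
    set ni : EuclideanSpace ℝ (Fin 3) := WithLp.toLp 2 (crossProduct (v : Fin 3 → ℝ) w : Fin 3 → ℝ) with hni
    set nj : EuclideanSpace ℝ (Fin 3) := WithLp.toLp 2 (crossProduct (w : Fin 3 → ℝ) u : Fin 3 → ℝ) with hnj
    have hzeq' : z = s • ni + t • nj := WithLp.ofLp_injective 2 hzeq
    refine ⟨a i - s • ni, ?_, ?_⟩
    · -- altitude i
      intro r s' hr hs'
      have hx : a i - (a i - s • ni) = s • ni := by abel
      rw [hx]
      have orth : ∀ m : Fin 4, m ≠ i → ⟪a m - a l, ni⟫ = 0 := by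
        intro m hm'
        rcases fin4_cases j k l i m hjk hjl hij.symm hkl hik.symm hil.symm hm' with h|h|h
        · subst h; rw [inner_eq_dot]; exact dot_self_cross _ _
        · subst h; rw [inner_eq_dot]; exact dot_cross_self _ _
        · subst h; simp
      have hsplit : a r - a s' = (a r - a l) - (a s' - a l) := by abel
      rw [hsplit, inner_sub_left, inner_smul_right, inner_smul_right,
        orth r hr, orth s' hs']
      ring
    · -- altitude j
      intro r s' hr hs'
      have hx : a j - (a i - s • ni) = -(t • nj) := by
        have : a j - (a i - s • ni) = -(z - s • ni) := by rw [hz]; abel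
        rw [this, hzeq']; abel
      rw [hx]
      have orth : ∀ m : Fin 4, m ≠ j → ⟪a m - a l, nj⟫ = 0 := by
        intro m hm'
        rcases fin4_cases i k l j m hik hil hij hkl hjk.symm hjl.symm hm' with h|h|h
        · subst h; rw [inner_eq_dot]; exact dot_cross_self _ _
        · subst h; rw [inner_eq_dot]; exact dot_self_cross _ _
        · subst h; simp
      have hsplit : a r - a s' = (a r - a l) - (a s' - a l) := by abel
      rw [hsplit, inner_sub_left, inner_neg_right, inner_neg_right,
        inner_smul_right, inner_smul_right, orth r hr, orth s' hs']
      ring
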